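/- The function β(x) = (x-2)·log(1-x) - (x+2)·log(1+x) is strictly positive on (0,1). -/

import Mathlib

open Real

lemma aux_log_one_add (x : ℝ) (hx : 0 ≤ x) :
    Real.log (1 + x) ≤ x - x^2/2 + x^3/3 - x^4/4 + x^5/5 := by
  set f : ℝ → ℝ := fun t => t - t^2/2 + t^3/3 - t^4/4 + t^5/5 - Real.log (1 + t) with hf
  have hder : ∀ y : ℝ, 0 < 1 + y →
      HasDerivAt f (1 - y + y^2 - y^3 + y^4 - 1/(1+y)) y := by
    intro y hy
    have hlog : HasDerivAt (fun t : ℝ => Real.log (1 + t)) (1/(1+y)) y := by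
      have h1 : HasDerivAt (fun t : ℝ => 1 + t) 1 y := by
        simpa using (hasDerivAt_id y).const_add 1
      have : HasDerivAt (fun t : ℝ => Real.log (1 + t)) _ y := (Real.hasDerivAt_log (ne_of_gt hy)).comp y h1
      simpa [one_div] using this
    have hpoly : HasDerivAt (fun t : ℝ => t - t^2/2 + t^3/3 - t^4/4 + t^5/5)
        (1 - y + y^2 - y^3 + y^4) y := by
      have : HasDerivAt (fun t : ℝ => t - t^2/2 + t^3/3 - t^4/4 + t^5/5) _ y := (((((hasDerivAt_id y).sub ((hasDerivAt_pow 2 y).div_const 2)).add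
        ((hasDerivAt_pow 3 y).div_const 3)).sub ((hasDerivAt_pow 4 y).div_const 4)).add
        ((hasDerivAt_pow 5 y).div_const 5))
      convert this using 1
      ring
    have hsub : HasDerivAt (fun t : ℝ => (t - t^2/2 + t^3/3 - t^4/4 + t^5/5) - Real.log (1 + t)) _ y := hpoly.sub hlog
    simpa [hf] using hsub
  have hmono : MonotoneOn f (Set.Icc 0 x) := by
    apply monotoneOn_of_deriv_nonneg (convex_Icc 0 x)
    · apply ContinuousOn.sub (by fun_prop)
      apply ContinuousOn.log (by fun_prop)
      intro y hy
      have : (0:ℝ) ≤ y := hy.1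
      linarith
    · intro y hy
      rw [interior_Icc] at hy
      exact ((hder y (by linarith [hy.1])).differentiableAt).differentiableWithinAt
    · intro y hy
      rw [interior_Icc] at hy
      have hy0 : 0 < y := hy.1
      have h1y : 0 < 1 + y := by linarith
      rw [(hder y h1y).deriv]
      have h5 : 0 < y^5 := pow_pos hy0 5
      have : 1 - y + y^2 - y^3 + y^4 - 1/(1+y) = y^5/(1+y) := by
        field_simp
        ring
      rw [this]
      positivity
  have h0 : f 0 = 0 := by simp [hf]
  have := hmono (Set.left_mem_Icc.mpr hx) (Set.right_mem_Icc.mpr hx) hx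
  rw [h0] at this
  simp only [hf] at this
  linarith

lemma aux_log_one_sub (x : ℝ) (hx : 0 ≤ x) (hx1 : x < 1) :
    x + x^2/2 + x^3/3 + x^4/4 + x^5/5 ≤ -Real.log (1 - x) := by
  set f : ℝ → ℝ := fun t => -Real.log (1 - t) - (t + t^2/2 + t^3/3 + t^4/4 + t^5/5) with hf
  have hder : ∀ y : ℝ, y < 1 →
      HasDerivAt f (1/(1-y) - (1 + y + y^2 + y^3 + y^4)) y := by
    intro y hy
    have h1y : (0:ℝ) < 1 - y := by linarith
    have hlog : HasDerivAt (fun t : ℝ => Real.log (1 - t)) (-(1/(1-y))) y := by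
      have h1 : HasDerivAt (fun t : ℝ => 1 - t) (-1) y := by
        simpa using (hasDerivAt_id y).const_sub 1
      have : HasDerivAt (fun t : ℝ => Real.log (1 - t)) _ y := (Real.hasDerivAt_log (ne_of_gt h1y)).comp y h1
      convert this using 1
      field_simp
    have hpoly : HasDerivAt (fun t : ℝ => t + t^2/2 + t^3/3 + t^4/4 + t^5/5)
        (1 + y + y^2 + y^3 + y^4) y := by
      have : HasDerivAt (fun t : ℝ => t + t^2/2 + t^3/3 + t^4/4 + t^5/5) _ y := (((((hasDerivAt_id y).add ((hasDerivAt_pow 2 y).div_const 2)).add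
        ((hasDerivAt_pow 3 y).div_const 3)).add ((hasDerivAt_pow 4 y).div_const 4)).add
        ((hasDerivAt_pow 5 y).div_const 5))
      convert this using 1
      ring
    have : HasDerivAt f _ y := (hlog.neg).sub hpoly
    convert this using 1
    ring
  have hmono : MonotoneOn f (Set.Icc 0 x) := by
    apply monotoneOn_of_deriv_nonneg (convex_Icc 0 x)
    · apply ContinuousOn.sub
      · apply ContinuousOn.neg
        apply ContinuousOn.log (by fun_prop)
        intro y hy
        have : y ≤ x := hy.2
        have : 0 < 1 - y := by linarith
        linarith
      · fun_prop
    · intro y hy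
      rw [interior_Icc] at hy
      exact ((hder y (lt_trans hy.2 hx1)).differentiableAt).differentiableWithinAt
    · intro y hy
      rw [interior_Icc] at hy
      have hy0 : 0 < y := hy.1
      have hy1 : y < 1 := lt_trans hy.2 hx1
      have h1y : 0 < 1 - y := by linarith
      rw [(hder y hy1).deriv]
      have : 1/(1-y) - (1 + y + y^2 + y^3 + y^4) = y^5/(1-y) := by
        field_simp
        ring
      rw [this]
      positivity
  have h0 : f 0 = 0 := by simp [hf]
  have := hmono (Set.left_mem_Icc.mpr hx) (Set.right_mem_Icc.mpr hx) hx
  rw [h0] at this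
  simp only [hf] at this
  linarith

theorem stmt3 (x : ℝ) (hx : x ∈ Set.Ioo (0:ℝ) 1) :
    0 < (x - 2) * Real.log (1 - x) - (x + 2) * Real.log (1 + x) := by
  obtain ⟨hx0, hx1⟩ := hx
  by_cases hc : x ≤ 9/10
  · have hL := aux_log_one_sub x hx0.le hx1
    have hM := aux_log_one_add x hx0.le
    have hx2 : x^2 ≤ 81/100 := by nlinarith
    have key : 0 < x^4/3 - 2*x^6/5 := by
      nlinarith [pow_pos hx0 4, mul_le_mul_of_nonneg_left hx2 (pow_pos hx0 4).le]
    nlinarith [key,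
      mul_le_mul_of_nonneg_left hL (by linarith : (0:ℝ) ≤ 2 - x),
      mul_le_mul_of_nonneg_left hM (by linarith : (0:ℝ) ≤ 2 + x)]
  · push_neg at hc
    have h1x : 0 < 1 - x := by linarith
    have hlog1 : Real.log (1 - x) < Real.log (1/10) := by
      apply Real.log_lt_log h1x
      linarith
    have hlog2 : Real.log (1 + x) < Real.log 2 := by
      apply Real.log_lt_log (by linarith)
      linarith
    have h110 : Real.log (1/10) = -Real.log 10 := by
      rw [one_div, Real.log_inv]
    have h8 : Real.log 8 < Real.log 10 := by
      apply Real.log_lt_log <;> norm_num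
    have h8' : Real.log 8 = 3 * Real.log 2 := by
      have : (8:ℝ) = 2^3 := by norm_num
      rw [this, Real.log_pow]
      push_cast; ring
    have hlog2pos : 0 < Real.log 2 := Real.log_pos (by norm_num)
    -- (x-2) log(1-x) = (2-x)(-log(1-x)) > (2-x) log 10 ≥ log 10
    have t1 : Real.log 10 < (x - 2) * Real.log (1 - x) := by
      have hneg : Real.log (1 - x) < -Real.log 10 := by rw [← h110]; exact hlog1
      have h2x : 1 ≤ 2 - x := by linarith
      have hlog10pos : 0 < Real.log 10 := Real.log_pos (by norm_num)
      nlinarith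
    have t2 : (x + 2) * Real.log (1 + x) < 3 * Real.log 2 := by
      nlinarith [Real.log_nonneg (by linarith : (1:ℝ) ≤ 1 + x)]
    linarith [h8' ▸ h8]
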